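/- Let l ≥ 1, let x₁, …, x_{l+1} be points of ℝ^l in general position, and let σ : ℝ^l → ℝ^{l+1} be given by σ(y) = (‖y − x₁‖, …, ‖y − x_{l+1}‖). Then for every subset B ⊆ ℝ^l, the Hausdorff dimension of B is at most the Hausdorff dimension of σ(B). (Equivalently: the compositional inverse τ : σ(ℝ^l) → ℝ^l of σ does not raise Hausdorff dimension, i.e., for every A ⊆ σ(ℝ^l), the Hausdorff dimension of τ(A) is at most the Hausdorff dimension of A.) -/

import Mathlib

open Set Submodule


/-- Let `x₁, …, x_{l+1}` be points of `ℝ^l` in general position and let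
`σ : ℝ^l → ℝ^{l+1}` be given by `σ(y) = (‖y − x₁‖, …, ‖y − x_{l+1}‖)`.
Then for every `B ⊆ ℝ^l`, the Hausdorff dimension of `B` is at most that of `σ(B)`
(equivalently, the inverse `τ` of `σ` on its image does not raise Hausdorff dimension). -/
theorem dimH_le_dimH_image_dist_map
    (l : ℕ) (hl : 1 ≤ l) (x : Fin (l + 1) → EuclideanSpace ℝ (Fin l))
    (hx : AffineIndependent ℝ x)
    (σ : EuclideanSpace ℝ (Fin l) → EuclideanSpace ℝ (Fin (l + 1)))
    (hσ : ∀ y, σ y = fun i => ‖y - x i‖)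
    (B : Set (EuclideanSpace ℝ (Fin l))) :
    dimH B ≤ dimH (σ '' B) := by
  classical
  haveI : Nonempty (Fin l) := ⟨⟨0, hl⟩⟩
  -- difference vectors
  set v : Fin l → EuclideanSpace ℝ (Fin l) := fun i => x i.castSucc - x (Fin.last l) with hv
  have hvli : LinearIndependent ℝ v := by
    have h := (affineIndependent_iff_linearIndependent_vsub ℝ x (Fin.last l)).1 hx
    have he : Function.Injective
        (fun i : Fin l => (⟨i.castSucc, (Fin.castSucc_lt_last i).ne⟩ :
          {j : Fin (l+1) // j ≠ Fin.last l})) := by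
      intro a b hab
      simpa [Fin.castSucc_inj] using congrArg Subtype.val hab
    have h2 := h.comp _ he
    convert h2 using 1
    all_goals rfl
  -- they form a basis
  have hcard : Fintype.card (Fin l) = Module.finrank ℝ (EuclideanSpace ℝ (Fin l)) :=
    by simp [finrank_euclideanSpace]
  let b := basisOfLinearIndependentOfCardEqFinrank hvli hcard
  have hb : ⇑b = v := coe_basisOfLinearIndependentOfCardEqFinrank hvli hcard
  -- the linear map φ y = (⟪v i, y⟫)
  let φ : EuclideanSpace ℝ (Fin l) →ₗ[ℝ] EuclideanSpace ℝ (Fin l) :=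
    { toFun := fun y => WithLp.toLp 2 (fun i => inner ℝ (v i) y)
      map_add' := by intro y z; ext i; simp [inner_add_right]
      map_smul' := by intro c y; ext i; simp [inner_smul_right] }
  have hφinj : Function.Injective φ := by
    rw [← LinearMap.ker_eq_bot, LinearMap.ker_eq_bot']
    intro y hy
    have h0 : ∀ i, (inner ℝ (v i) y : ℝ) = 0 := fun i => congrArg (fun w : EuclideanSpace ℝ (Fin l) => w.ofLp i) hy
    have hspan : Submodule.span ℝ (Set.range v) = ⊤ := by
      rw [← hb]; exact b.span_eq
    have : y ∈ (Submodule.span ℝ (Set.range v))ᗮ := by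
      rw [Submodule.mem_orthogonal]
      intro u hu
      induction hu using Submodule.span_induction with
      | mem u hu => obtain ⟨i, rfl⟩ := hu; exact h0 i
      | zero => simp
      | add u w _ _ h1 h2 => simp [inner_add_left, h1, h2]
      | smul c u _ h1 => simp [inner_smul_left, h1]
    rw [hspan, Submodule.top_orthogonal_eq_bot] at this
    simpa using this
  have hfr : Module.finrank ℝ (EuclideanSpace ℝ (Fin l)) = Module.finrank ℝ (EuclideanSpace ℝ (Fin l)) := rfl
  let ψ := LinearMap.linearEquivOfInjective φ hφinj hfr
  have hψ : ∀ y, ψ y = φ y := fun y =>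
    LinearMap.linearEquivOfInjective_apply hφinj hfr y
  -- the smooth map G recovering φ y from σ y
  let G : EuclideanSpace ℝ (Fin (l+1)) → EuclideanSpace ℝ (Fin l) :=
    fun s => WithLp.toLp 2 (fun i =>
      (s (Fin.last l) ^ 2 - s i.castSucc ^ 2 - ‖x (Fin.last l)‖ ^ 2 + ‖x i.castSucc‖ ^ 2) / 2)
  have hG : ContDiff ℝ 1 G := by
    rw [contDiff_euclidean]
    intro i
    have p1 : ContDiff ℝ 1 (fun s : EuclideanSpace ℝ (Fin (l+1)) => s (Fin.last l)) :=
      (EuclideanSpace.proj (𝕜 := ℝ) (Fin.last l)).contDiff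
    have p2 : ContDiff ℝ 1 (fun s : EuclideanSpace ℝ (Fin (l+1)) => s i.castSucc) :=
      (EuclideanSpace.proj (𝕜 := ℝ) i.castSucc).contDiff
    exact ((((p1.pow 2).sub (p2.pow 2)).sub contDiff_const).add contDiff_const).div_const 2
  let F : EuclideanSpace ℝ (Fin (l+1)) → EuclideanSpace ℝ (Fin l) := fun s => ψ.symm (G s)
  have hF : ContDiff ℝ 1 F := by
    have h1 : ContDiff ℝ 1 (ψ.symm.toLinearMap.toContinuousLinearMap : EuclideanSpace ℝ (Fin l) → EuclideanSpace ℝ (Fin l)) :=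
      (ψ.symm.toLinearMap.toContinuousLinearMap).contDiff
    exact h1.comp hG
  -- F is a left inverse of σ
  have key : ∀ y, F (σ y) = y := by
    intro y
    have hGσ : G (σ y) = φ y := by
      ext i
      have : (σ y) (Fin.last l) = ‖y - x (Fin.last l)‖ := by rw [hσ]
      have h2 : (σ y) i.castSucc = ‖y - x i.castSucc‖ := by rw [hσ]
      show ((σ y) (Fin.last l) ^ 2 - (σ y) i.castSucc ^ 2 - ‖x (Fin.last l)‖ ^ 2
        + ‖x i.castSucc‖ ^ 2) / 2 = inner ℝ (v i) y
      rw [this, h2, hv]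
      simp only [norm_sub_sq_real, inner_sub_left, inner_sub_right, real_inner_comm y]
      ring
    show ψ.symm (G (σ y)) = y
    rw [hGσ, ← hψ, LinearEquiv.symm_apply_apply]
  have himg : F '' (σ '' B) = B := by
    rw [← Set.image_comp]
    have : Set.EqOn (F ∘ σ) id B := fun y _ => key y
    rw [this.image_eq, Set.image_id]
  calc dimH B = dimH (F '' (σ '' B)) := by rw [himg]
    _ ≤ dimH (σ '' B) :=
      hF.contDiffOn.dimH_image_le convex_univ (Set.subset_univ _)
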